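/- Let v : ℝ → ℝ be 1-periodic and C¹ with |v′(θ)| ≤ D₀ for all θ (D₀ > 0), let α, θ*, E* ∈ ℝ, let 0 < ρ₀ ≤ 1/64 and 0 < ε ≤ ρ₀⁴. Let Λ ⊂ ℤ be a finite interval such that |v(θ* + mα) − E*| ≥ ρ₀ for all m ∈ Λ. Then for every θ with |θ − θ*| < ρ₀/(8D₀) and every E with |E − E*| < ρ₀/2, the matrix H^Λ(θ) − E is invertible and for all m, n ∈ Λ: |R^Λ_{θ,E}(m,n)| ≤ (8/ρ₀)(8ε/ρ₀)^{|m−n|}; in particular, for |m − n| ≥ 1, log|R^Λ_{θ,E}(m,n)| ≤ −(|log ε|/4)·|m − n|. -/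

import Mathlib

/-- The Dirichlet restriction `H^Λ(θ)` of the quasi-periodic Schrödinger operator
`εΔ + v(θ + ·α)` to the integer interval `Λ = [a,b]`. -/
noncomputable def schrodingerMatrix (ε : ℝ) (v : ℝ → ℝ) (α θ : ℝ) (a b : ℤ) :
    Matrix ↥(Finset.Icc a b) ↥(Finset.Icc a b) ℝ :=
  Matrix.of fun m n =>
    if (m : ℤ) = (n : ℤ) then v (θ + ((m : ℤ) : ℝ) * α)
    else if ((m : ℤ) - (n : ℤ)).natAbs = 1 then ε else 0




lemma lipschitz_of_deriv_bound (v v' : ℝ → ℝ) (D₀ : ℝ)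
    (hv' : ∀ θ, HasDerivAt v (v' θ) θ) (hbd : ∀ θ, |v' θ| ≤ D₀) :
    ∀ x y, |v x - v y| ≤ D₀ * |x - y| := by
  have hcont : Continuous v := by
    rw [continuous_iff_continuousAt]
    exact fun x => (hv' x).continuousAt
  have key : ∀ x y, x < y → |v x - v y| ≤ D₀ * |x - y| := by
    intro x y hxy
    obtain ⟨c, _, hc⟩ := exists_hasDerivAt_eq_slope v v' hxy hcont.continuousOn
      (fun z _ => hv' z)
    have hne : y - x ≠ 0 := by linarith
    have heq : v y - v x = v' c * (y - x) := by
      rw [hc]; field_simp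
    have : |v x - v y| = |v' c| * |y - x| := by
      rw [abs_sub_comm, heq, abs_mul]
    rw [this, abs_sub_comm x y]
    exact mul_le_mul_of_nonneg_right (hbd c) (abs_nonneg _)
  intro x y
  rcases lt_trichotomy x y with h | h | h
  · exact key x y h
  · simp [h]
  · rw [abs_sub_comm, abs_sub_comm x y]; exact key y x h

noncomputable def extU (a b : ℤ) (u : ↥(Finset.Icc a b) → ℝ) (z : ℤ) : ℝ :=
  if h : z ∈ Finset.Icc a b then u ⟨z, h⟩ else 0

lemma extU_of_not_mem (a b : ℤ) (u : ↥(Finset.Icc a b) → ℝ) (z : ℤ)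
    (h : z ∉ Finset.Icc a b) : extU a b u z = 0 := dif_neg h

lemma extU_coe (a b : ℤ) (u : ↥(Finset.Icc a b) → ℝ) (j : ↥(Finset.Icc a b)) :
    extU a b u (j : ℤ) = u j := by
  rw [extU, dif_pos j.2]

lemma row_identity (ε : ℝ) (v : ℝ → ℝ) (α θ E : ℝ) (a b : ℤ)
    (u : ↥(Finset.Icc a b) → ℝ) (m : ↥(Finset.Icc a b)) :
    ((schrodingerMatrix ε v α θ a b - E • 1).mulVec u) m
      = ε * extU a b u ((m:ℤ)-1) + (v (θ + ((m:ℤ):ℝ)*α) - E) * extU a b u (m:ℤ)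
        + ε * extU a b u ((m:ℤ)+1) := by
  classical
  set C : ℤ → ℝ := fun z =>
    (if (m:ℤ) = z then v (θ + ((m:ℤ):ℝ)*α) - E
     else if ((m:ℤ) - z).natAbs = 1 then ε else 0) * extU a b u z with hC
  have h1 : ((schrodingerMatrix ε v α θ a b - E • 1).mulVec u) m
      = ∑ z ∈ Finset.Icc a b, C z := by
    rw [Matrix.mulVec, dotProduct]
    rw [← Finset.sum_coe_sort (Finset.Icc a b) C]
    apply Finset.sum_congr rfl
    intro j _
    have hju : extU a b u (j:ℤ) = u j := extU_coe a b u j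
    by_cases h : (m:ℤ) = (j:ℤ)
    · have hmj : m = j := Subtype.ext h
      simp [hC, hmj, schrodingerMatrix, Matrix.sub_apply, Matrix.smul_apply,
        Matrix.one_apply, hju]
    · have hmj : m ≠ j := fun hh => h (by rw [hh])
      simp [hC, h, hmj, schrodingerMatrix, Matrix.sub_apply, Matrix.smul_apply,
        Matrix.one_apply, hju]
  rw [h1]
  have h2 : ∑ z ∈ Finset.Icc a b, C z
      = ∑ z ∈ Finset.Icc a b ∪ {(m:ℤ)-1, (m:ℤ), (m:ℤ)+1}, C z := by
    apply Finset.sum_subset Finset.subset_union_left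
    intro z _ hz
    simp only [hC]
    rw [extU_of_not_mem a b u z hz, mul_zero]
  have h3 : ∑ z ∈ Finset.Icc a b ∪ {(m:ℤ)-1, (m:ℤ), (m:ℤ)+1}, C z
      = ∑ z ∈ ({(m:ℤ)-1, (m:ℤ), (m:ℤ)+1} : Finset ℤ), C z := by
    symm
    apply Finset.sum_subset Finset.subset_union_right
    intro z _ hz
    simp only [Finset.mem_insert, Finset.mem_singleton, not_or] at hz
    have h4 : (m:ℤ) ≠ z := fun hh => hz.2.1 hh.symm
    have h5 : ((m:ℤ) - z).natAbs ≠ 1 := by omega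
    simp [hC, h4, h5]
  rw [h2, h3]
  have d1 : ((m:ℤ)-1) ∉ ({(m:ℤ), (m:ℤ)+1} : Finset ℤ) := by simp; omega
  have d2 : ((m:ℤ)) ∉ ({(m:ℤ)+1} : Finset ℤ) := by simp
  rw [Finset.sum_insert d1, Finset.sum_insert d2, Finset.sum_singleton]
  have e1 : C ((m:ℤ)-1) = ε * extU a b u ((m:ℤ)-1) := by
    have h7 : (m:ℤ) ≠ (m:ℤ)-1 := by omega
    have : ((m:ℤ) - ((m:ℤ)-1)).natAbs = 1 := by omega
    simp [hC, h7, this]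
  have e2 : C ((m:ℤ)) = (v (θ + ((m:ℤ):ℝ)*α) - E) * extU a b u (m:ℤ) := by
    simp [hC]
  have e3 : C ((m:ℤ)+1) = ε * extU a b u ((m:ℤ)+1) := by
    have h6 : (m:ℤ) ≠ (m:ℤ)+1 := by omega
    have : ((m:ℤ) - ((m:ℤ)+1)).natAbs = 1 := by omega
    simp [hC, h6, this]
  rw [e1, e2, e3]; ring


lemma tridiag_bound (ρ₀ ε : ℝ) (a b : ℤ) (dd U : ℤ → ℝ)
    (hρ : 0 < ρ₀) (hε : 0 ≤ ε) (hsmall : ε ≤ ρ₀/16) (hab : a ≤ b)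
    (hdd : ∀ m, a ≤ m → m ≤ b → ρ₀/4 ≤ |dd m|)
    (hU0 : ∀ z, z ∉ Finset.Icc a b → U z = 0)
    (c : ℝ) (hc : 0 ≤ c)
    (hrow : ∀ m, a ≤ m → m ≤ b → |ε * U (m-1) + dd m * U m + ε * U (m+1)| ≤ c) :
    ∀ z, |U z| ≤ 8 * c / ρ₀ := by
  obtain ⟨ms, hms, hmax⟩ := Finset.exists_max_image (Finset.Icc a b) (fun z => |U z|)
    ⟨a, Finset.mem_Icc.mpr ⟨le_refl a, hab⟩⟩
  set K := |U ms| with hK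
  have hKall : ∀ z, |U z| ≤ K := by
    intro z
    by_cases h : z ∈ Finset.Icc a b
    · exact hmax z h
    · rw [hU0 z h]; simp [hK, abs_nonneg]
  have hK0 : 0 ≤ K := abs_nonneg _
  rw [Finset.mem_Icc] at hms
  have h1 := hrow ms hms.1 hms.2
  have hb1 : |ε * U (ms-1)| ≤ ε * K := by
    rw [abs_mul, abs_of_nonneg hε]
    exact mul_le_mul_of_nonneg_left (hKall _) hε
  have hb2 : |ε * U (ms+1)| ≤ ε * K := by
    rw [abs_mul, abs_of_nonneg hε]
    exact mul_le_mul_of_nonneg_left (hKall _) hε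
  have h2 : |dd ms * U ms| ≤ c + 2 * (ε * K) := by
    have t1 := abs_sub (ε * U (ms-1) + dd ms * U ms + ε * U (ms+1)) (ε * U (ms-1))
    have t2 := abs_sub (ε * U (ms-1) + dd ms * U ms + ε * U (ms+1) - ε * U (ms-1))
      (ε * U (ms+1))
    have he : ε * U (ms-1) + dd ms * U ms + ε * U (ms+1) - ε * U (ms-1) - ε * U (ms+1)
        = dd ms * U ms := by ring
    rw [he] at t2
    linarith
  have h3 : ρ₀/4 * K ≤ |dd ms * U ms| := by
    rw [abs_mul]
    exact mul_le_mul_of_nonneg_right (hdd ms hms.1 hms.2) hK0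
  have hKb : K ≤ 8 * c / ρ₀ := by
    rw [le_div_iff₀ hρ]
    nlinarith
  intro z
  exact le_trans (hKall z) hKb

lemma tridiag_decay (ρ₀ ε : ℝ) (a b n : ℤ) (dd U : ℤ → ℝ)
    (hρ : 0 < ρ₀) (hε : 0 < ε) (hsmall : ε ≤ ρ₀/16) (hab : a ≤ b)
    (hdd : ∀ m, a ≤ m → m ≤ b → ρ₀/4 ≤ |dd m|)
    (hU0 : ∀ z, z ∉ Finset.Icc a b → U z = 0)
    (hrow : ∀ m, a ≤ m → m ≤ b →
      ε * U (m-1) + dd m * U m + ε * U (m+1) = if m = n then 1 else 0) :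
    ∀ N : ℕ, ∀ z : ℤ, N ≤ (z - n).natAbs → |U z| ≤ 8/ρ₀ * (8*ε/ρ₀)^N := by
  intro N
  induction N with
  | zero =>
    intro z _
    have h := tridiag_bound ρ₀ ε a b dd U hρ hε.le hsmall hab hdd hU0 1 zero_le_one
      (fun m h1 h2 => by rw [hrow m h1 h2]; split <;> norm_num) z
    calc |U z| ≤ 8 * 1 / ρ₀ := h
      _ = 8/ρ₀ * (8*ε/ρ₀)^0 := by ring
  | succ N IH =>
    intro z hz
    by_cases hzin : z ∈ Finset.Icc a b
    · rw [Finset.mem_Icc] at hzin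
      have hzn : z ≠ n := by omega
      have heq := hrow z hzin.1 hzin.2
      rw [if_neg hzn] at heq
      set Q := (8*ε/ρ₀)^N with hQ
      have hb1 : |U (z-1)| ≤ 8/ρ₀ * Q := IH (z-1) (by omega)
      have hb2 : |U (z+1)| ≤ 8/ρ₀ * Q := IH (z+1) (by omega)
      have h2 : |dd z * U z| ≤ ε * |U (z-1)| + ε * |U (z+1)| := by
        have he : -(ε * U (z-1)) - ε * U (z+1) = dd z * U z := by linarith
        have t1 : |dd z * U z| ≤ |(-(ε * U (z-1)))| + |ε * U (z+1)| := by
          rw [← he]; exact abs_sub _ _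
        have e1 : |(-(ε * U (z-1)))| = ε * |U (z-1)| := by
          rw [abs_neg, abs_mul, abs_of_pos hε]
        have e2 : |ε * U (z+1)| = ε * |U (z+1)| := by
          rw [abs_mul, abs_of_pos hε]
        rw [e1, e2] at t1
        exact t1
      have h3 : ρ₀/4 * |U z| ≤ |dd z * U z| := by
        rw [abs_mul]
        exact mul_le_mul_of_nonneg_right (hdd z hzin.1 hzin.2) (abs_nonneg _)
      have hT : (0:ℝ) ≤ 8/ρ₀ * Q := by positivity
      have key : ρ₀/4 * |U z| ≤ 2 * ε * (8/ρ₀ * Q) := by nlinarith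
      have goal' : |U z| ≤ 8*ε * (8/ρ₀ * Q) / ρ₀ := by
        rw [le_div_iff₀ hρ]
        nlinarith
      calc |U z| ≤ 8*ε * (8/ρ₀ * Q) / ρ₀ := goal'
        _ = 8/ρ₀ * ((8*ε/ρ₀)^(N+1)) := by rw [pow_succ, ← hQ]; ring
    · rw [hU0 z hzin]
      simp only [abs_zero]
      positivity


lemma tridiag_nonvanish (ρ₀ ε : ℝ) (a b n : ℤ) (dd U : ℤ → ℝ)
    (hρ : 0 < ρ₀) (hε : 0 < ε) (hsmall : ε ≤ ρ₀/16)
    (han : a ≤ n) (hnb : n ≤ b)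
    (hdd : ∀ m, a ≤ m → m ≤ b → ρ₀/4 ≤ |dd m|)
    (hU0 : ∀ z, z ∉ Finset.Icc a b → U z = 0)
    (hrow : ∀ m, a ≤ m → m ≤ b →
      ε * U (m-1) + dd m * U m + ε * U (m+1) = if m = n then 1 else 0) :
    ∀ m, a ≤ m → m ≤ b → U m ≠ 0 := by
  have step : ∀ (j : ℤ), a ≤ j → j ≤ b → j ≠ n → ∀ t : ℝ, |t| ≤ 1 →
      U (j-1) = t * U j → ∃ t' : ℝ, t' ≠ 0 ∧ |t'| ≤ 1 ∧ U j = t' * U (j+1) := by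
    intro j haj hjb hjn t ht hU
    have heq := hrow j haj hjb
    rw [if_neg hjn, hU] at heq
    have heq2 : (dd j + ε * t) * U j = -(ε * U (j+1)) := by linarith
    have hD : ρ₀/8 ≤ |dd j + ε * t| := by
      have h1 : |dd j| ≤ |dd j + ε * t| + |ε * t| := by
        have := abs_sub (dd j + ε * t) (ε * t)
        simpa using this
      have h2 : |ε * t| ≤ ε := by
        rw [abs_mul, abs_of_pos hε]
        nlinarith [abs_nonneg t]
      have h3 := hdd j haj hjb
      linarith
    have hDne : dd j + ε * t ≠ 0 := by
      intro h; rw [h] at hD; simp at hD; linarith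
    refine ⟨-ε / (dd j + ε * t), ?_, ?_, ?_⟩
    · exact div_ne_zero (neg_ne_zero.mpr hε.ne') hDne
    · rw [abs_div, abs_neg, abs_of_pos hε, div_le_one (lt_of_lt_of_le (by linarith) hD)]
      linarith
    · field_simp
      linarith [heq2]
  have stepR : ∀ (j : ℤ), a ≤ j → j ≤ b → j ≠ n → ∀ s : ℝ, |s| ≤ 1 →
      U (j+1) = s * U j → ∃ s' : ℝ, s' ≠ 0 ∧ |s'| ≤ 1 ∧ U j = s' * U (j-1) := by
    intro j haj hjb hjn s hs hU
    have heq := hrow j haj hjb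
    rw [if_neg hjn, hU] at heq
    have heq2 : (dd j + ε * s) * U j = -(ε * U (j-1)) := by linarith
    have hD : ρ₀/8 ≤ |dd j + ε * s| := by
      have h1 : |dd j| ≤ |dd j + ε * s| + |ε * s| := by
        have := abs_sub (dd j + ε * s) (ε * s)
        simpa using this
      have h2 : |ε * s| ≤ ε := by
        rw [abs_mul, abs_of_pos hε]
        nlinarith [abs_nonneg s]
      have h3 := hdd j haj hjb
      linarith
    have hDne : dd j + ε * s ≠ 0 := by
      intro h; rw [h] at hD; simp at hD; linarith
    refine ⟨-ε / (dd j + ε * s), ?_, ?_, ?_⟩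
    · exact div_ne_zero (neg_ne_zero.mpr hε.ne') hDne
    · rw [abs_div, abs_neg, abs_of_pos hε, div_le_one (lt_of_lt_of_le (by linarith) hD)]
      linarith
    · field_simp
      linarith [heq2]
  have Lt : ∀ j, a ≤ j → (j ≤ n - 1 → ∃ t, t ≠ 0 ∧ |t| ≤ 1 ∧ U j = t * U (j+1)) := by
    refine fun j haj => Int.le_induction (motive := fun j _ => j ≤ n - 1 → ∃ t, t ≠ 0 ∧ |t| ≤ 1 ∧ U j = t * U (j+1)) ?_ ?_ j haj
    · intro hj
      refine step a le_rfl (by omega) (by omega) 0 (by norm_num) ?_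
      rw [zero_mul]
      exact hU0 (a-1) (by simp)
    · intro j haj IH hj
      obtain ⟨t, ht0, ht1, htU⟩ := IH (by omega)
      refine step (j+1) (by omega) (by omega) (by omega) t ht1 ?_
      simpa using htU
  have Rt : ∀ j, j ≤ b → (n + 1 ≤ j → ∃ s, s ≠ 0 ∧ |s| ≤ 1 ∧ U j = s * U (j-1)) := by
    refine fun j hjb => Int.le_induction_down (motive := fun j _ => n + 1 ≤ j → ∃ s, s ≠ 0 ∧ |s| ≤ 1 ∧ U j = s * U (j-1)) ?_ ?_ j hjb
    · intro hj
      refine stepR b (by omega) le_rfl (by omega) 0 (by norm_num) ?_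
      rw [zero_mul]
      exact hU0 (b+1) (by simp)
    · intro j hjb IH hj
      obtain ⟨s, hs0, hs1, hsU⟩ := IH (by omega)
      refine stepR (j-1) (by omega) (by omega) (by omega) s hs1 ?_
      simpa using hsU
  intro m ham hmb hUm
  -- zeros propagate to n
  rcases lt_trichotomy m n with hmn | hmn | hmn
  · have Zup : ∀ j, m ≤ j → (j ≤ n → U j = 0) := by
      refine fun j hmj => Int.le_induction (motive := fun j _ => j ≤ n → U j = 0) ?_ ?_ j hmj
      · intro _; exact hUm
      · intro j hmj IH hj
        have hUj := IH (by omega)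
        obtain ⟨t, ht0, ht1, htU⟩ := Lt j (by omega) (by omega)
        rw [hUj] at htU
        rcases mul_eq_zero.mp htU.symm with h | h
        · exact absurd h ht0
        · exact h
    have hUn : U n = 0 := Zup n (by omega) le_rfl
    have hUn1 : U (n-1) = 0 := Zup (n-1) (by omega) (by omega)
    have heq := hrow n han hnb
    rw [if_pos rfl, hUn, hUn1] at heq
    have hUp1 : U (n+1) = 0 := by
      by_cases h : n + 1 ≤ b
      · obtain ⟨s, hs0, hs1, hsU⟩ := Rt (n+1) h (by omega)
        simpa [hUn] using hsU
      · exact hU0 (n+1) (by simp; omega)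
    rw [hUp1] at heq
    simp at heq
  · subst hmn
    have hUn1 : U (m-1) = 0 := by
      by_cases h : a ≤ m - 1
      · obtain ⟨t, ht0, ht1, htU⟩ := Lt (m-1) h (by omega)
        simpa [hUm] using htU
      · exact hU0 (m-1) (by simp; omega)
    have hUp1 : U (m+1) = 0 := by
      by_cases h : m + 1 ≤ b
      · obtain ⟨s, hs0, hs1, hsU⟩ := Rt (m+1) h (by omega)
        simpa [hUm] using hsU
      · exact hU0 (m+1) (by simp; omega)
    have heq := hrow m ham hmb
    rw [if_pos rfl, hUm, hUn1, hUp1] at heq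
    simp at heq
  · have Zdown : ∀ j, j ≤ m → (n ≤ j → U j = 0) := by
      refine fun j hjm => Int.le_induction_down (motive := fun j _ => n ≤ j → U j = 0) ?_ ?_ j hjm
      · intro _; exact hUm
      · intro j hjm IH hj
        have hUj := IH (by omega)
        obtain ⟨s, hs0, hs1, hsU⟩ := Rt j (by omega) (by omega)
        rw [hUj] at hsU
        rcases mul_eq_zero.mp hsU.symm with h | h
        · exact absurd h hs0
        · exact h
    have hUn : U n = 0 := Zdown n (by omega) le_rfl
    have hUp1 : U (n+1) = 0 := Zdown (n+1) (by omega) (by omega)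
    have heq := hrow n han hnb
    rw [if_pos rfl, hUn, hUp1] at heq
    have hUn1 : U (n-1) = 0 := by
      by_cases h : a ≤ n - 1
      · obtain ⟨t, ht0, ht1, htU⟩ := Lt (n-1) h (by omega)
        simpa [hUn] using htU
      · exact hU0 (n-1) (by simp; omega)
    rw [hUn1] at heq
    simp at heq


/-- **Initial-scale Green's function decay** (Neumann series): if `|v(θ* + mα) − E*| ≥ ρ₀` on `Λ`
and `ε ≤ ρ₀⁴`, then for `θ` near `θ*` and `E` near `E*` the matrix `H^Λ(θ) − E` is invertible,
its inverse has off-diagonal decay `|R(m,n)| ≤ (8/ρ₀)(8ε/ρ₀)^{|m−n|}`, and in particular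
`log|R(m,n)| ≤ −(|log ε|/4)|m−n|` for `|m−n| ≥ 1`. -/
theorem initial_green_decay (v v' : ℝ → ℝ) (D₀ : ℝ) (hD₀ : 0 < D₀)
    (hper : ∀ θ, v (θ + 1) = v θ)
    (hv' : ∀ θ, HasDerivAt v (v' θ) θ) (hv'cont : Continuous v')
    (hbd : ∀ θ, |v' θ| ≤ D₀)
    (α θs Es ρ₀ ε : ℝ) (hρ₀ : 0 < ρ₀) (hρ₀' : ρ₀ ≤ 1 / 64)
    (hε : 0 < ε) (hε' : ε ≤ ρ₀ ^ 4)
    (a b : ℤ) (hab : a ≤ b)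
    (hnr : ∀ m ∈ Finset.Icc a b, ρ₀ ≤ |v (θs + (m : ℝ) * α) - Es|) :
    ∀ θ : ℝ, |θ - θs| < ρ₀ / (8 * D₀) → ∀ E : ℝ, |E - Es| < ρ₀ / 2 →
      IsUnit (schrodingerMatrix ε v α θ a b - E • 1) ∧
      ∀ m n : ↥(Finset.Icc a b),
        |(schrodingerMatrix ε v α θ a b - E • 1)⁻¹ m n| ≤
          (8 / ρ₀) * (8 * ε / ρ₀) ^ (((m : ℤ) - (n : ℤ)).natAbs) ∧
        (1 ≤ ((m : ℤ) - (n : ℤ)).natAbs →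
          Real.log |(schrodingerMatrix ε v α θ a b - E • 1)⁻¹ m n| ≤
            -(|Real.log ε| / 4) * (((m : ℤ) - (n : ℤ)).natAbs : ℝ)) := by
  intro θ hθ E hE
  classical
  set M := schrodingerMatrix ε v α θ a b - E • 1 with hM
  set dd : ℤ → ℝ := fun z => v (θ + (z:ℝ) * α) - E with hdddef
  have hρ16 : ε ≤ ρ₀ / 16 := by
    have h3 : ρ₀^3 ≤ (1/64:ℝ)^3 := pow_le_pow_left₀ hρ₀.le hρ₀' 3
    nlinarith [mul_le_mul_of_nonneg_left h3 hρ₀.le]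
  have hddlow : ∀ m', a ≤ m' → m' ≤ b → ρ₀/4 ≤ |dd m'| := by
    intro m' h1 h2
    have hnr' := hnr m' (Finset.mem_Icc.mpr ⟨h1, h2⟩)
    have hlip := lipschitz_of_deriv_bound v v' D₀ hv' hbd
      (θ + (m':ℝ)*α) (θs + (m':ℝ)*α)
    have he : (θ + (m':ℝ)*α) - (θs + (m':ℝ)*α) = θ - θs := by ring
    rw [he] at hlip
    have hD : D₀ * |θ - θs| ≤ ρ₀/8 := by
      have h4 := mul_le_mul_of_nonneg_left hθ.le hD₀.le
      have he2 : D₀ * (ρ₀/(8*D₀)) = ρ₀/8 := by field_simp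
      linarith [he2 ▸ h4]
    set x := v (θ + (m':ℝ)*α) with hx
    set x0 := v (θs + (m':ℝ)*α) with hx0
    have t1 := abs_add_le ((x - E) + (x0 - x)) (E - Es)
    have t2 := abs_add_le (x - E) (x0 - x)
    have he3 : ((x - E) + (x0 - x)) + (E - Es) = x0 - Es := by ring
    rw [he3] at t1
    have hsc : |x0 - x| = |x - x0| := abs_sub_comm _ _
    show ρ₀/4 ≤ |x - E|
    linarith
  -- invertibility
  have hdet : IsUnit M.det := by
    rw [isUnit_iff_ne_zero]
    intro hdet0
    obtain ⟨w, hw0, hwz⟩ := Matrix.exists_mulVec_eq_zero_iff.mpr hdet0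
    have hrowz : ∀ m', a ≤ m' → m' ≤ b →
        |ε * extU a b w (m'-1) + dd m' * extU a b w m' + ε * extU a b w (m'+1)| ≤ 0 := by
      intro m' h1 h2
      have hmem : m' ∈ Finset.Icc a b := Finset.mem_Icc.mpr ⟨h1, h2⟩
      have hri : M.mulVec w ⟨m', hmem⟩
          = ε * extU a b w (m'-1) + dd m' * extU a b w m' + ε * extU a b w (m'+1) :=
        row_identity ε v α θ E a b w ⟨m', hmem⟩
      rw [hwz] at hri
      rw [← hri]
      simp
    have hz := tridiag_bound ρ₀ ε a b dd (extU a b w) hρ₀ hε.le hρ16 hab hddlow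
      (fun z hz => extU_of_not_mem a b w z hz) 0 le_rfl hrowz
    apply hw0
    funext j
    have hj := hz (j:ℤ)
    rw [extU_coe] at hj
    have : |w j| ≤ 0 := by simpa using hj
    have : w j = 0 := abs_eq_zero.mp (le_antisymm this (abs_nonneg _))
    simpa using this
  have hunit : IsUnit M := (Matrix.isUnit_iff_isUnit_det M).mpr hdet
  refine ⟨hunit, ?_⟩
  intro m n
  set u : ↥(Finset.Icc a b) → ℝ := fun j => M⁻¹ j n with hudef
  have hmulinv : M * M⁻¹ = 1 := Matrix.mul_nonsing_inv M hdet
  have hrown : ∀ m', a ≤ m' → m' ≤ b →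
      ε * extU a b u (m'-1) + dd m' * extU a b u m' + ε * extU a b u (m'+1)
        = if m' = (n:ℤ) then 1 else 0 := by
    intro m' h1 h2
    have hmem : m' ∈ Finset.Icc a b := Finset.mem_Icc.mpr ⟨h1, h2⟩
    have hri : M.mulVec u ⟨m', hmem⟩
        = ε * extU a b u (m'-1) + dd m' * extU a b u m' + ε * extU a b u (m'+1) :=
      row_identity ε v α θ E a b u ⟨m', hmem⟩
    rw [← hri]
    have hmv : M.mulVec u ⟨m', hmem⟩ = (M * M⁻¹) ⟨m', hmem⟩ n := by
      rw [Matrix.mulVec, dotProduct, Matrix.mul_apply]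
    rw [hmv, hmulinv, Matrix.one_apply]
    by_cases h : (⟨m', hmem⟩ : ↥(Finset.Icc a b)) = n
    · rw [if_pos h, if_pos (congrArg Subtype.val h)]
    · rw [if_neg h, if_neg (fun hh => h (Subtype.ext hh))]
  have han : a ≤ (n:ℤ) := (Finset.mem_Icc.mp n.2).1
  have hnb : (n:ℤ) ≤ b := (Finset.mem_Icc.mp n.2).2
  have ham : a ≤ (m:ℤ) := (Finset.mem_Icc.mp m.2).1
  have hmb : (m:ℤ) ≤ b := (Finset.mem_Icc.mp m.2).2
  have hdecay := tridiag_decay ρ₀ ε a b (n:ℤ) dd (extU a b u) hρ₀ hε hρ16 hab hddlow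
    (fun z hz => extU_of_not_mem a b u z hz) hrown (((m:ℤ)-(n:ℤ)).natAbs) (m:ℤ) le_rfl
  rw [extU_coe] at hdecay
  have hdecay' : |M⁻¹ m n| ≤ 8/ρ₀ * (8*ε/ρ₀) ^ (((m:ℤ)-(n:ℤ)).natAbs) := hdecay
  constructor
  · exact hdecay'
  · intro hN
    have hnonz := tridiag_nonvanish ρ₀ ε a b (n:ℤ) dd (extU a b u) hρ₀ hε hρ16 han hnb
      hddlow (fun z hz => extU_of_not_mem a b u z hz) hrown (m:ℤ) ham hmb
    rw [extU_coe] at hnonz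
    have hpos : 0 < |M⁻¹ m n| := abs_pos.mpr hnonz
    have hlog1 : Real.log |M⁻¹ m n|
        ≤ Real.log (8/ρ₀ * (8*ε/ρ₀) ^ (((m:ℤ)-(n:ℤ)).natAbs)) :=
      Real.log_le_log hpos hdecay'
    have hLsplit : Real.log (8/ρ₀ * (8*ε/ρ₀) ^ (((m:ℤ)-(n:ℤ)).natAbs))
        = (Real.log 8 - Real.log ρ₀)
          + (((m:ℤ)-(n:ℤ)).natAbs : ℝ) * (Real.log 8 + Real.log ε - Real.log ρ₀) := by
      rw [Real.log_mul (by positivity) (by positivity), Real.log_div (by norm_num) hρ₀.ne',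
        Real.log_pow, Real.log_div (by positivity) hρ₀.ne',
        Real.log_mul (by norm_num) hε.ne']
    have l8 : (0:ℝ) ≤ Real.log 8 := Real.log_nonneg (by norm_num)
    have hPbound : Real.log ρ₀ ≤ -(2 * Real.log 8) := by
      have h5 := Real.log_le_log hρ₀ hρ₀'
      have h64 : Real.log (1/64 : ℝ) = -(2 * Real.log 8) := by
        rw [show (1/64:ℝ) = ((8:ℝ)^(2:ℕ))⁻¹ by norm_num, Real.log_inv, Real.log_pow]
        push_cast; ring
      linarith [h64 ▸ h5]
    have hε1 : ε < 1 := by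
      have h4 : ρ₀^4 ≤ (1/64:ℝ)^4 := pow_le_pow_left₀ hρ₀.le hρ₀' 4
      nlinarith
    have hLneg : Real.log ε < 0 := Real.log_neg hε hε1
    have habs : |Real.log ε| = -Real.log ε := abs_of_neg hLneg
    have hL4P : Real.log ε ≤ 4 * Real.log ρ₀ := by
      have h5 := Real.log_le_log hε hε'
      rw [Real.log_pow] at h5
      push_cast at h5
      exact h5
    have hNR : (1:ℝ) ≤ ((((m:ℤ)-(n:ℤ)).natAbs : ℕ) : ℝ) := by exact_mod_cast hN
    rw [habs]
    set NN : ℝ := ((((m:ℤ)-(n:ℤ)).natAbs : ℕ) : ℝ) with hNN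
    set P := Real.log ρ₀
    set L := Real.log ε
    set l := Real.log 8
    have hT0 : (0:ℝ) ≤ -(3/4)*L - l + P - (l - P) := by linarith
    have hprod : 0 ≤ (NN - 1) * (-(3/4)*L - l + P) := by
      apply mul_nonneg (by linarith)
      linarith
    calc Real.log |M⁻¹ m n| ≤ (l - P) + NN * (l + L - P) := by
          rw [hLsplit] at hlog1; exact hlog1
      _ ≤ -(-L/4) * NN := by nlinarith
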